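/- If p is the smallest prime dividing the order of a finite group G and Pr(G) > 1/p, then G is nilpotent. -/

import Mathlib

section all
set_option maxHeartbeats 1000000

open Subgroup
open scoped commutatorElement

lemma CP.normal_of_index_min {Γ : Type*} [Group Γ] [Finite Γ] {p : ℕ} (hp : p.Prime)
    (hmin : ∀ q : ℕ, q.Prime → q ∣ Nat.card Γ → p ≤ q) {H : Subgroup Γ} (hH : H.index = p) :
    H.Normal := by
  classical
  have hcore : H.normalCore.index ∣ Nat.factorial p := by
    rw [Subgroup.normalCore_eq_ker, Subgroup.index_ker]
    have h1 : Nat.card (MulAction.toPermHom Γ (Γ ⧸ H)).range ∣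
        Nat.card (Equiv.Perm (Γ ⧸ H)) := Subgroup.card_subgroup_dvd_card _
    have h2 : Nat.card (Equiv.Perm (Γ ⧸ H)) = Nat.factorial p := by
      haveI : Fintype (Γ ⧸ H) := Fintype.ofFinite _
      rw [Nat.card_eq_fintype_card, Fintype.card_perm, ← Nat.card_eq_fintype_card,
        ← Subgroup.index_eq_card, hH]
    rwa [h2] at h1
  have hle : H.normalCore ≤ H := Subgroup.normalCore_le H
  have hrel : H.normalCore.relIndex H * H.index = H.normalCore.index :=
    Subgroup.relIndex_mul_index hle
  set r := H.normalCore.relIndex H with hr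
  have hrdvd : r ∣ Nat.factorial (p - 1) := by
    have hfac : Nat.factorial p = p * Nat.factorial (p - 1) := by
      have hpos := hp.pos
      obtain ⟨m, rfl⟩ : ∃ m, p = m + 1 := ⟨p - 1, by omega⟩
      simp [Nat.factorial_succ]
    have h3 : r * p ∣ p * Nat.factorial (p - 1) := by
      rw [hH] at hrel
      rw [hrel, ← hfac]; exact hcore
    exact (Nat.mul_dvd_mul_iff_left hp.pos).mp (by rwa [mul_comm r p] at h3)
  have hr1 : r = 1 := by
    by_contra hr1
    have hq : r.minFac.Prime := Nat.minFac_prime hr1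
    have hqr : r.minFac ∣ r := Nat.minFac_dvd r
    have hqcard : r.minFac ∣ Nat.card Γ := by
      refine dvd_trans (dvd_trans hqr ⟨H.index, ?_⟩) H.normalCore.index_dvd_card
      exact hrel.symm
    have h1 : p ≤ r.minFac := hmin _ hq hqcard
    have h2 : r.minFac ≤ p - 1 := (Nat.Prime.dvd_factorial hq).mp (hqr.trans hrdvd)
    have := hp.two_le
    omega
  have : H ≤ H.normalCore := Subgroup.relIndex_eq_one.mp hr1
  have heq : H.normalCore = H := le_antisymm hle this
  rw [← heq]; infer_instance

lemma CP.commutator_le_of_index_prime {Γ : Type*} [Group Γ] {p : ℕ} (hp : p.Prime)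
    {H : Subgroup Γ} [H.Normal] (hH : H.index = p) : commutator Γ ≤ H := by
  haveI : Fact p.Prime := ⟨hp⟩
  have hcard : Nat.card (Γ ⧸ H) = p := by rw [← Subgroup.index_eq_card, hH]
  haveI := isCyclic_of_prime_card hcard
  letI : CommGroup (Γ ⧸ H) := IsCyclic.commGroup
  have := Abelianization.commutator_subset_ker (QuotientGroup.mk' H)
  rwa [QuotientGroup.ker_mk'] at this

lemma CP.commProb_quotient_ge (G : Type*) [Group G] [Finite G] (N : Subgroup G) [N.Normal] :
    commProb G ≤ commProb (G ⧸ N) := by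
  classical
  have key : Nat.card {pr : G × G // Commute pr.1 pr.2} ≤
      Nat.card ({pr : (G ⧸ N) × (G ⧸ N) // Commute pr.1 pr.2} × (N × N)) := by
    refine Nat.card_le_card_of_injective (fun s =>
      (⟨((s.1.1 : G ⧸ N), (s.1.2 : G ⧸ N)), s.2.map (QuotientGroup.mk' N)⟩,
        (⟨((s.1.1 : G ⧸ N) : G ⧸ N).out⁻¹ * s.1.1, (QuotientGroup.eq).mp (QuotientGroup.out_eq' _)⟩,
         ⟨((s.1.2 : G ⧸ N) : G ⧸ N).out⁻¹ * s.1.2, (QuotientGroup.eq).mp (QuotientGroup.out_eq' _)⟩))) ?_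
    rintro ⟨⟨x₁, x₂⟩, hx⟩ ⟨⟨y₁, y₂⟩, hy⟩ h
    simp only [Prod.mk.injEq, Subtype.mk.injEq] at h
    have h1 : (x₁ : G ⧸ N) = y₁ := congrArg (fun s => s.1.1) h.1
    have h2 : (x₂ : G ⧸ N) = y₂ := congrArg (fun s => s.1.2) h.1
    have h3 := h.2.1; have h4 := h.2.2
    have e1 : x₁ = y₁ := by
      have this : ((x₁ : G ⧸ N)).out = ((y₁ : G ⧸ N)).out := congrArg (fun q => ((q : G ⧸ N)).out) h1
      calc x₁ = ((x₁ : G ⧸ N)).out * (((x₁ : G ⧸ N)).out⁻¹ * x₁) := by group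
      _ = ((y₁ : G ⧸ N)).out * (((y₁ : G ⧸ N)).out⁻¹ * y₁) := by rw [← h3, this]
      _ = y₁ := by group
    have e2 : x₂ = y₂ := by
      have this : ((x₂ : G ⧸ N)).out = ((y₂ : G ⧸ N)).out := congrArg (fun q => ((q : G ⧸ N)).out) h2
      calc x₂ = ((x₂ : G ⧸ N)).out * (((x₂ : G ⧸ N)).out⁻¹ * x₂) := by group
      _ = ((y₂ : G ⧸ N)).out * (((y₂ : G ⧸ N)).out⁻¹ * y₂) := by rw [← h4, this]
      _ = y₂ := by group
    subst e1; subst e2; rfl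
  rw [Nat.card_prod, Nat.card_prod] at key
  have hcard : Nat.card G = Nat.card (G ⧸ N) * Nat.card N :=
    Subgroup.card_eq_card_quotient_mul_card_subgroup N
  have hQpos : 0 < Nat.card (G ⧸ N) := Nat.card_pos
  have hGpos : 0 < Nat.card G := Nat.card_pos
  rw [commProb_def, commProb_def, div_le_div_iff₀ (by positivity) (by positivity)]
  have hnat : Nat.card {pr : G × G // Commute pr.1 pr.2} * Nat.card (G ⧸ N) ^ 2 ≤
      Nat.card {pr : (G ⧸ N) × (G ⧸ N) // Commute pr.1 pr.2} * Nat.card G ^ 2 := by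
    calc Nat.card {pr : G × G // Commute pr.1 pr.2} * Nat.card (G ⧸ N) ^ 2
        ≤ (Nat.card {pr : (G ⧸ N) × (G ⧸ N) // Commute pr.1 pr.2} * (Nat.card N * Nat.card N)) *
          Nat.card (G ⧸ N) ^ 2 := Nat.mul_le_mul_right _ key
      _ = Nat.card {pr : (G ⧸ N) × (G ⧸ N) // Commute pr.1 pr.2} * Nat.card G ^ 2 := by
          rw [hcard]; ring
  exact_mod_cast hnat

variable {G : Type*} [Group G]
set_option linter.unusedSectionVars false

lemma CP.card_conjAct : Nat.card (ConjAct G) = Nat.card G := rfl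

lemma CP.classCard_eq_index (x : G) :
    (ConjClasses.mk x).carrier.ncard = (MulAction.stabilizer (ConjAct G) x).index := by
  rw [MulAction.index_stabilizer, ConjAct.orbit_eq_carrier_conjClasses]

lemma CP.mem_stabilizer_iff_commute (x y : G) :
    ConjAct.toConjAct y ∈ MulAction.stabilizer (ConjAct G) x ↔ Commute y x := by
  rw [MulAction.mem_stabilizer_iff, ConjAct.smul_def, ConjAct.ofConjAct_toConjAct]
  exact ⟨fun h => mul_inv_eq_iff_eq_mul.mp h, fun h => mul_inv_eq_iff_eq_mul.mpr h.eq⟩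

section
variable [Finite G]

lemma CP.classCard_dvd (x : G) :
    (ConjClasses.mk x).carrier.ncard ∣ Nat.card G := by
  rw [CP.classCard_eq_index, ← CP.card_conjAct (G := G)]
  exact Subgroup.index_dvd_card _

lemma CP.classCard_pos (c : ConjClasses G) : 0 < c.carrier.ncard := by
  obtain ⟨x, rfl⟩ := ConjClasses.mk_surjective c
  exact (Set.ncard_pos (Set.toFinite _)).mpr ⟨x, ConjClasses.mem_carrier_mk⟩

lemma CP.classCard_eq_one {x : G} (hx : (ConjClasses.mk x).carrier.ncard = 1) :
    x ∈ Subgroup.center G := by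
  obtain ⟨a, ha⟩ := Set.ncard_eq_one.mp hx
  have hxa : x = a := by
    have : x ∈ (ConjClasses.mk x).carrier := ConjClasses.mem_carrier_mk
    rw [ha] at this; exact this
  rw [Subgroup.mem_center_iff]
  intro g
  have hg : g * x * g⁻¹ ∈ (ConjClasses.mk x).carrier := by
    rw [ConjClasses.mem_carrier_iff_mk_eq, ConjClasses.mk_eq_mk_iff_isConj]
    exact (isConj_iff.mpr ⟨g, rfl⟩).symm
  rw [ha] at hg
  have h2 : g * x * g⁻¹ = x := by rw [hg, ← hxa]
  calc g * x = (g * x * g⁻¹) * g := by group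
  _ = x * g := by rw [h2]

lemma CP.classCard_one (hx : x = (1:G)) : (ConjClasses.mk x).carrier.ncard = 1 := by
  subst hx
  apply Set.ncard_eq_one.mpr ⟨1, ?_⟩
  ext y
  simp only [ConjClasses.mem_carrier_iff_mk_eq, ConjClasses.mk_eq_mk_iff_isConj,
    Set.mem_singleton_iff]
  constructor
  · intro h; exact isConj_one_right.mp h.symm
  · rintro rfl; rfl

end

variable {G : Type*} [Group G]

section
variable [Finite G]

lemma CP.p_le_of_dvd {p d n : ℕ} (hp : p.Prime) (hmin : ∀ q : ℕ, q.Prime → q ∣ n → p ≤ q)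
    (hn : 0 < n) (hdvd : d ∣ n) (hd : d ≠ 1) : p ≤ d := by
  have hd0 : d ≠ 0 := by rintro rfl; rw [zero_dvd_iff] at hdvd; omega
  have hq : d.minFac.Prime := Nat.minFac_prime hd
  exact le_trans (hmin _ hq ((Nat.minFac_dvd d).trans hdvd)) (Nat.minFac_le (by omega))

end

section big
set_option linter.unusedSectionVars false
variable {G : Type*} [Group G] [Finite G]


lemma CP.center_ne_bot {p : ℕ} (hp : p.Prime)
    (hdvd : p ∣ Nat.card G) (hmin : ∀ q : ℕ, q.Prime → q ∣ Nat.card G → p ≤ q)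
    (h : 1 / (p : ℚ) < commProb G) : Subgroup.center G ≠ ⊥ := by
  intro hcenter
  classical
  haveI : Fintype G := Fintype.ofFinite G
  haveI : Fintype (ConjClasses G) := Fintype.ofFinite _
  have hnpos : 0 < Nat.card G := Nat.card_pos
  have hp2 : 2 ≤ p := hp.two_le
  have hkpos : 0 < Nat.card (ConjClasses G) := Nat.card_pos
  -- step: G is nonabelian
  obtain ⟨a, b, hab⟩ : ∃ a b : G, ¬ Commute a b := by
    by_contra hcon
    push_neg at hcon
    have h1 : ∀ x : G, x = 1 := by
      intro x
      have hx : x ∈ Subgroup.center G := Subgroup.mem_center_iff.mpr (fun g => (hcon x g).symm)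
      rwa [hcenter, Subgroup.mem_bot] at hx
    have : (1 : G) ∈ (⊤ : Subgroup G) := Subgroup.mem_top 1
    have hcard1 : Nat.card G = 1 := by
      haveI : Subsingleton G := ⟨fun x y => by rw [h1 x, h1 y]⟩
      exact Nat.card_eq_one_iff_unique.mpr ⟨inferInstance, inferInstance⟩
    rw [hcard1, Nat.dvd_one] at hdvd
    omega
  set y := ⁅a, b⁆ with hy
  have hy1 : y ≠ 1 := fun h1 => hab (commutatorElement_eq_one_iff_commute.mp h1)
  -- counting setup
  have hF2 : Nat.card G < p * Nat.card (ConjClasses G) := by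
    rw [commProb_def'] at h
    have := (div_lt_div_iff₀ (by positivity) (by exact_mod_cast hnpos)).mp h
    have h2 : (Nat.card G : ℚ) < (Nat.card (ConjClasses G)) * p := by linarith
    exact_mod_cast (by linarith : (Nat.card G : ℚ) < p * Nat.card (ConjClasses G))
  set f : ConjClasses G → ℕ := fun c => c.carrier.ncard with hf
  have hF1 : ∑ c : ConjClasses G, f c = Nat.card G := by
    rw [← finsum_eq_sum_of_fintype]
    exact Group.sum_card_conj_classes_eq_card G
  set U1 : Finset (ConjClasses G) := Finset.univ.filter (fun c => f c ≠ 1) with hU1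
  set A : Finset (ConjClasses G) := Finset.univ.filter (fun c => f c = 1) with hA
  set B : Finset (ConjClasses G) := U1.filter (fun c => f c = p) with hB
  set C : Finset (ConjClasses G) := U1.filter (fun c => f c ≠ p) with hC
  have hone : f (ConjClasses.mk (1 : G)) = 1 := CP.classCard_one rfl
  have hAeq : A = {ConjClasses.mk (1 : G)} := by
    ext c
    simp only [hA, Finset.mem_filter, Finset.mem_univ, true_and, Finset.mem_singleton]
    constructor
    · intro h1
      obtain ⟨x, rfl⟩ := ConjClasses.mk_surjective c
      have hx : x ∈ Subgroup.center G := CP.classCard_eq_one h1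
      rw [hcenter, Subgroup.mem_bot] at hx
      rw [hx]
    · rintro rfl; exact hone
  have hsplit1 : ∑ c ∈ A, f c + ∑ c ∈ U1, f c = Nat.card G := by
    rw [← hF1]
    exact Finset.sum_filter_add_sum_filter_not _ _ _
  have hsplit2 : ∑ c ∈ B, f c + ∑ c ∈ C, f c = ∑ c ∈ U1, f c := by
    exact Finset.sum_filter_add_sum_filter_not _ _ _
  have hcsplit1 : A.card + U1.card = Nat.card (ConjClasses G) := by
    rw [Nat.card_eq_fintype_card, ← Finset.card_univ]
    exact Finset.card_filter_add_card_filter_not _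
  have hcsplit2 : B.card + C.card = U1.card := Finset.card_filter_add_card_filter_not _
  have hAsum : ∑ c ∈ A, f c = 1 := by rw [hAeq, Finset.sum_singleton, hone]
  have hAcard : A.card = 1 := by rw [hAeq, Finset.card_singleton]
  have hgep : ∀ c : ConjClasses G, f c ≠ 1 → p ≤ f c := by
    intro c hc
    obtain ⟨x, rfl⟩ := ConjClasses.mk_surjective c
    exact CP.p_le_of_dvd hp hmin hnpos (CP.classCard_dvd x) hc
  have hBsum : ∑ c ∈ B, f c = p * B.card := by
    rw [Finset.sum_congr rfl (fun c hc => (Finset.mem_filter.mp hc).2), Finset.sum_const,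
      smul_eq_mul, mul_comm]
  have hCsum : C.card * (p + 1) ≤ ∑ c ∈ C, f c := by
    have := Finset.card_nsmul_le_sum C f (p+1) (fun c hc => ?_)
    · simpa [smul_eq_mul] using this
    obtain ⟨h1, h2⟩ := Finset.mem_filter.mp hc
    have h3 := (Finset.mem_filter.mp h1).2
    have := hgep c h3
    omega
  -- y commutes with every element in a class of size p
  have hBy : ∀ x : G, f (ConjClasses.mk x) = p → Commute y x := by
    intro x hx
    have hidx : (MulAction.stabilizer (ConjAct G) x).index = p := by
      rw [← CP.classCard_eq_index]; exact hx
    haveI : (MulAction.stabilizer (ConjAct G) x).Normal :=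
      CP.normal_of_index_min hp (fun q hq hdq => hmin q hq hdq) hidx
    have hcomm : commutator (ConjAct G) ≤ MulAction.stabilizer (ConjAct G) x :=
      CP.commutator_le_of_index_prime hp hidx
    have hymem : ConjAct.toConjAct y ∈ commutator (ConjAct G) := by
      have : ConjAct.toConjAct y = ⁅ConjAct.toConjAct a, ConjAct.toConjAct b⁆ := by
        rw [hy]; exact map_commutatorElement _ _ _
      rw [this]
      exact Subgroup.commutator_mem_commutator (Subgroup.mem_top _) (Subgroup.mem_top _)
    exact (CP.mem_stabilizer_iff_commute x y).mp (hcomm hymem)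
  set T : Finset G := Finset.univ.filter (fun x : G => f (ConjClasses.mk x) = p) with hT
  have hT1 : ∑ c ∈ B, f c = T.card := by
    rw [Finset.card_eq_sum_card_fiberwise (f := fun x : G => ConjClasses.mk x) (t := B)
      (fun x hx => by
        have := (Finset.mem_filter.mp hx).2
        simp only [hB, hU1, Finset.mem_filter, Finset.mem_univ, true_and]
        exact (Finset.mem_filter.mpr ⟨Finset.mem_filter.mpr ⟨Finset.mem_univ _, by omega⟩, this⟩ :
          ConjClasses.mk x ∈ B))]
    refine Finset.sum_congr rfl (fun c hc => ?_)
    have hcp : f c = p := (Finset.mem_filter.mp hc).2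
    have : Finset.filter (fun x : G => ConjClasses.mk x = c) T = c.carrier.toFinset := by
      ext x
      simp only [hT, Finset.mem_filter, Finset.mem_univ, true_and, Set.mem_toFinset,
        ConjClasses.mem_carrier_iff_mk_eq]
      constructor
      · exact fun hh => hh.2
      · intro hh; exact ⟨by rw [hh, hcp], hh⟩
    rw [this, ← Set.ncard_eq_toFinset_card']
  have hT2 : p * T.card ≤ Nat.card G := by
    set Cy := MulAction.stabilizer (ConjAct G) y with hCy
    have hfy : f (ConjClasses.mk y) = Cy.index := CP.classCard_eq_index y
    have hidx_ne : Cy.index ≠ 1 := by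
      intro h1
      have : y ∈ Subgroup.center G := CP.classCard_eq_one (by rw [CP.classCard_eq_index y]; exact h1)
      rw [hcenter, Subgroup.mem_bot] at this
      exact hy1 this
    have hpidx : p ≤ Cy.index :=
      CP.p_le_of_dvd hp hmin hnpos (Subgroup.index_dvd_card Cy) hidx_ne
    have hcards : Nat.card Cy * Cy.index = Nat.card G := Subgroup.card_mul_index Cy
    have hTle : T.card ≤ Nat.card Cy := by
      have hinj : Set.InjOn (fun x : G => ConjAct.toConjAct x) T :=
        fun x _ x' _ hxx => ConjAct.toConjAct.injective hxx
      have hmaps : ∀ x ∈ T, ConjAct.toConjAct x ∈ (Cy : Set (ConjAct G)).toFinset := by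
        intro x hx
        rw [Set.mem_toFinset]
        exact (CP.mem_stabilizer_iff_commute y x).mpr ((hBy x (Finset.mem_filter.mp hx).2).symm)
      have := Finset.card_le_card_of_injOn _ hmaps hinj
      rwa [Set.toFinset_card, ← Nat.card_eq_fintype_card, SetLike.coe_sort_coe] at this
    calc p * T.card ≤ Cy.index * Nat.card Cy := Nat.mul_le_mul hpidx hTle
    _ = Nat.card G := by rw [mul_comm]; exact hcards
  -- final arithmetic
  have hTB : T.card = p * B.card := by rw [← hT1, hBsum]
  rw [hTB] at hT2
  have hk : Nat.card (ConjClasses G) = 1 + B.card + C.card := by omega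
  have e1 : Nat.card G = 1 + p * B.card + ∑ c ∈ C, f c := by linarith
  have e2' : Nat.card G < p + p * B.card + p * C.card := by
    calc Nat.card G < p * (1 + B.card + C.card) := by rw [← hk]; exact hF2
    _ = p + p * B.card + p * C.card := by ring
  have hCsum' : p * C.card + C.card ≤ ∑ c ∈ C, f c := by
    calc p * C.card + C.card = C.card * (p + 1) := by ring
    _ ≤ ∑ c ∈ C, f c := hCsum
  have hEC2 : (∑ c ∈ C, f c) + 2 ≤ p + p * C.card := by
    have h3 : (∑ c ∈ C, f c) + 1 < p + p * C.card := by linarith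
    exact h3
  have hCp : C.card + 2 ≤ p := by
    have h3 : C.card + 1 < p := by linarith
    exact h3
  have hnpp : Nat.card G < p * p := by
    by_contra hge
    push_neg at hge
    have m0 : p * Nat.card G = p * (1 + p * B.card + ∑ c ∈ C, f c) := by rw [← e1]
    have m1 : p * ((∑ c ∈ C, f c) + 2) ≤ p * (p + p * C.card) := Nat.mul_le_mul_left p hEC2
    have m2 : (p * p) * (C.card + 2) ≤ (p * p) * p := Nat.mul_le_mul_left (p * p) hCp
    zify at m0 m1 m2 hT2 hge hp2 ⊢
    have m3 : (0 : ℤ) ≤ ((p : ℤ) - 2) * ((Nat.card G : ℤ) - (p : ℤ) * p) :=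
      mul_nonneg (by linarith) (by linarith)
    nlinarith [m0, m1, m2, hT2, hge, hp2, m3]
  obtain ⟨m, hm⟩ := hdvd
  have hm0 : m ≠ 0 := by rintro rfl; rw [mul_zero] at hm; omega
  have hmp : m < p := by
    by_contra hmp
    push_neg at hmp
    have : p * p ≤ p * m := Nat.mul_le_mul_left p hmp
    omega
  have hm1 : m = 1 := by
    by_contra hm1
    have hq : m.minFac.Prime := Nat.minFac_prime hm1
    have : p ≤ m.minFac := hmin _ hq ((Nat.minFac_dvd m).trans ⟨p, by rw [hm]; ring⟩)
    have := Nat.minFac_le (Nat.pos_of_ne_zero hm0)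
    omega
  haveI : Fact p.Prime := ⟨hp⟩
  have hcard : Nat.card G = p := by rw [hm, hm1, mul_one]
  haveI := isCyclic_of_prime_card hcard
  letI : CommGroup G := IsCyclic.commGroup
  exact hab (mul_comm a b)
end big

end all

universe u

lemma CP.main : ∀ (n : ℕ) (G : Type u) [Group G] [Finite G], Nat.card G = n →
    ∀ (p : ℕ), p.Prime → p ∣ Nat.card G → (∀ q : ℕ, q.Prime → q ∣ Nat.card G → p ≤ q) →
    1 / (p : ℚ) < commProb G → Group.IsNilpotent G := by
  intro n
  induction n using Nat.strong_induction_on with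
  | _ n IH =>
    intro G _ _ hcard p hp hdvd hmin h
    have hne : Subgroup.center G ≠ ⊥ := CP.center_ne_bot hp hdvd hmin h
    have hz : 1 < Nat.card (Subgroup.center G) :=
      (Subgroup.center G).one_lt_card_iff_ne_bot.mpr hne
    have hcards : Nat.card G = Nat.card (G ⧸ Subgroup.center G) * Nat.card (Subgroup.center G) :=
      Subgroup.card_eq_card_quotient_mul_card_subgroup _
    have hQpos : 0 < Nat.card (G ⧸ Subgroup.center G) := Nat.card_pos
    have hQlt : Nat.card (G ⧸ Subgroup.center G) < n := by
      rw [← hcard]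
      calc Nat.card (G ⧸ Subgroup.center G) = Nat.card (G ⧸ Subgroup.center G) * 1 := by ring
      _ < Nat.card (G ⧸ Subgroup.center G) * Nat.card (Subgroup.center G) := by
          exact Nat.mul_lt_mul_of_le_of_lt (le_refl _) hz hQpos
      _ = Nat.card G := hcards.symm
    by_cases hQ1 : Nat.card (G ⧸ Subgroup.center G) = 1
    · haveI : Subsingleton (G ⧸ Subgroup.center G) := by
        have := Nat.card_eq_one_iff_unique.mp hQ1
        exact this.1
      exact of_quotient_center_nilpotent inferInstance
    · set q := (Nat.card (G ⧸ Subgroup.center G)).minFac with hq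
      have hqprime : q.Prime := Nat.minFac_prime hQ1
      have hqdvd : q ∣ Nat.card (G ⧸ Subgroup.center G) := Nat.minFac_dvd _
      have hqG : q ∣ Nat.card G := hqdvd.trans ⟨Nat.card (Subgroup.center G), hcards⟩
      have hpq : p ≤ q := hmin q hqprime hqG
      have hcp : 1 / (q : ℚ) < commProb (G ⧸ Subgroup.center G) := by
        have h1 : (1 : ℚ) / q ≤ 1 / p := by
          apply one_div_le_one_div_of_le
          · exact_mod_cast hp.pos
          · exact_mod_cast hpq
        calc (1 : ℚ) / q ≤ 1 / p := h1
        _ < commProb G := h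
        _ ≤ commProb (G ⧸ Subgroup.center G) := CP.commProb_quotient_ge G _
      have hnilQ : Group.IsNilpotent (G ⧸ Subgroup.center G) := by
        refine IH _ hQlt (G ⧸ Subgroup.center G) rfl q hqprime hqdvd ?_ hcp
        intro r hr hrdvd
        exact Nat.minFac_le_of_dvd hr.two_le hrdvd
      exact of_quotient_center_nilpotent hnilQ

theorem nilpotent_of_commProb_gt (G : Type*) [Group G] [Finite G] (p : ℕ) (hp : p.Prime)
    (hdvd : p ∣ Nat.card G) (hmin : ∀ q : ℕ, q.Prime → q ∣ Nat.card G → p ≤ q)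
    (h : 1 / (p : ℚ) < commProb G) : Group.IsNilpotent G :=
  CP.main (Nat.card G) G rfl p hp hdvd hmin h
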